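/- Let x, y : ℝ≥0 → ℝⁿ be solutions of ẋ = f(x) + g(x)u(t−D) and ẏ = f(y) + g(y)u(t−D̂) with x(0) = y(0), where f is Lipschitz with constant L_f, g is Lipschitz with constant L_g, ‖u(t)‖ ≤ u_max for all t, and ‖u(t−D) − u(t−D̂)‖ ≤ ε_max for all t. Then the error e(t) = x(t) − y(t) satisfies ‖e(t)‖ ≤ ε_max ∫₀ᵗ e^{a(t−τ)} ‖g(y(τ))‖ dτ, where a = L_f + L_g(u_max + ε_max). -/

import Mathlib

open scoped NNReal
open Real

/-- Grönwall-type bound on the error between solutions with true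
and estimated input delay. -/
theorem stmt_1 (n m : ℕ)
    (f : EuclideanSpace ℝ (Fin n) → EuclideanSpace ℝ (Fin n))
    (g : EuclideanSpace ℝ (Fin n) → (EuclideanSpace ℝ (Fin m) →L[ℝ] EuclideanSpace ℝ (Fin n)))
    (Lf Lg : ℝ≥0) (hf : LipschitzWith Lf f) (hg : LipschitzWith Lg g)
    (u : ℝ → EuclideanSpace ℝ (Fin m)) (umax εmax : ℝ)
    (hu : ∀ t : ℝ, ‖u t‖ ≤ umax)
    (D Dhat : ℝ)
    (hε : ∀ t : ℝ, ‖u (t - D) - u (t - Dhat)‖ ≤ εmax)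
    (x y : ℝ → EuclideanSpace ℝ (Fin n))
    (hx : ∀ t : ℝ, 0 ≤ t → HasDerivAt x (f (x t) + g (x t) (u (t - D))) t)
    (hy : ∀ t : ℝ, 0 ≤ t → HasDerivAt y (f (y t) + g (y t) (u (t - Dhat))) t)
    (h0 : x 0 = y 0)
    (a : ℝ) (ha : a = (Lf : ℝ) + (Lg : ℝ) * (umax + εmax)) :
    ∀ t : ℝ, 0 ≤ t →
      ‖x t - y t‖ ≤ εmax * ∫ τ in (0:ℝ)..t, Real.exp (a * (t - τ)) * ‖g (y τ)‖ := by
  intro T hT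
  have hεnn : 0 ≤ εmax := le_trans (norm_nonneg _) (hε 0)
  have humaxnn : 0 ≤ umax := le_trans (norm_nonneg _) (hu 0)
  have hann : 0 ≤ a := by
    rw [ha]; positivity
  -- continuity of y on [0,∞)
  have hycont : ∀ s : ℝ, 0 ≤ s → ContinuousAt y s := fun s hs => (hy s hs).continuousAt
  -- extended integrand, continuous everywhere
  set h : ℝ → ℝ := fun σ => Real.exp (-(a * σ)) * ‖g (y (max σ 0))‖ with hh
  have hcont : Continuous h := by
    apply Continuous.mul
    · exact Real.continuous_exp.comp (continuous_const.mul continuous_id).neg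
    · apply continuous_norm.comp
      apply hg.continuous.comp
      refine continuous_iff_continuousAt.2 fun σ => ?_
      have hm : ContinuousAt (fun s : ℝ => max s 0) σ :=
        (continuous_id.max continuous_const).continuousAt
      have hc : ContinuousAt (y ∘ fun s : ℝ => max s 0) σ :=
        ContinuousAt.comp (hycont _ (le_max_right σ 0)) hm
      exact hc
  set F : ℝ → ℝ := fun t => ∫ σ in (0:ℝ)..t, h σ with hF
  have hFd : ∀ t : ℝ, HasDerivAt F (h t) t := fun t =>
    (hcont.integral_hasStrictDerivAt 0 t).hasDerivAt
  set B : ℝ → ℝ := fun t => εmax * (Real.exp (a * t) * F t) with hB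
  set B' : ℝ → ℝ := fun t => a * B t + εmax * ‖g (y (max t 0))‖ with hB'
  have hBd : ∀ t : ℝ, HasDerivAt B (B' t) t := by
    intro t
    have h1 : HasDerivAt (fun t => Real.exp (a * t)) (a * Real.exp (a * t)) t := by
      simpa [mul_comm] using ((hasDerivAt_id t).const_mul a).exp
    have := (h1.mul (hFd t)).const_mul εmax
    refine this.congr_deriv ?_
    have hE : Real.exp (a * t) * Real.exp (-(a * t)) = 1 := by
      rw [← Real.exp_add]; simp
    simp only [hB', hB, hh, hF]
    rw [show Real.exp (a * t) * (Real.exp (-(a * t)) * ‖g (y (max t 0))‖)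
        = ‖g (y (max t 0))‖ from by rw [← mul_assoc, hE, one_mul]]
    ring
  set e : ℝ → EuclideanSpace ℝ (Fin n) := fun t => x t - y t with he
  set e' : ℝ → EuclideanSpace ℝ (Fin n) := fun t =>
    (f (x t) + g (x t) (u (t - D))) - (f (y t) + g (y t) (u (t - Dhat))) with he'
  have hed : ∀ t ∈ Set.Ico (0:ℝ) T, HasDerivWithinAt e (e' t) (Set.Ici t) t := fun t ht =>
    ((hx t ht.1).sub (hy t ht.1)).hasDerivWithinAt
  have hecont : ContinuousOn e (Set.Icc 0 T) := fun t ht =>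
    ((hx t ht.1).sub (hy t ht.1)).continuousAt.continuousWithinAt
  have hB0 : B 0 = 0 := by
    simp [hB, hF, intervalIntegral.integral_same]
  -- key derivative bound
  have key : ∀ t ∈ Set.Ico (0:ℝ) T, ‖e' t‖ ≤ a * ‖e t‖ + εmax * ‖g (y t)‖ := by
    intro t _
    have hdecomp : e' t = (f (x t) - f (y t)) + ((g (x t) - g (y t)) (u (t - D)))
        + (g (y t)) (u (t - D) - u (t - Dhat)) := by
      simp only [he', ContinuousLinearMap.sub_apply, (g (y t)).map_sub]
      abel
    have h1 : ‖f (x t) - f (y t)‖ ≤ (Lf : ℝ) * ‖e t‖ := by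
      simpa [he, dist_eq_norm] using hf.dist_le_mul (x t) (y t)
    have h2 : ‖(g (x t) - g (y t)) (u (t - D))‖ ≤ (Lg : ℝ) * ‖e t‖ * umax := by
      calc ‖(g (x t) - g (y t)) (u (t - D))‖ ≤ ‖g (x t) - g (y t)‖ * ‖u (t - D)‖ :=
            (g (x t) - g (y t)).le_opNorm _
        _ ≤ ((Lg : ℝ) * ‖e t‖) * umax := by
            have hgl : ‖g (x t) - g (y t)‖ ≤ (Lg : ℝ) * ‖e t‖ := by
              simpa [he, dist_eq_norm] using hg.dist_le_mul (x t) (y t)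
            exact mul_le_mul hgl (hu _) (norm_nonneg _) (by positivity)
    have h3 : ‖(g (y t)) (u (t - D) - u (t - Dhat))‖ ≤ ‖g (y t)‖ * εmax := by
      calc ‖(g (y t)) (u (t - D) - u (t - Dhat))‖ ≤ ‖g (y t)‖ * ‖u (t - D) - u (t - Dhat)‖ :=
            (g (y t)).le_opNorm _
        _ ≤ ‖g (y t)‖ * εmax := mul_le_mul_of_nonneg_left (hε t) (norm_nonneg _)
    have hnorm : ‖e' t‖ ≤ (Lf : ℝ) * ‖e t‖ + (Lg : ℝ) * ‖e t‖ * umax + ‖g (y t)‖ * εmax := by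
      rw [hdecomp]
      exact le_trans (norm_add_le _ _)
        (add_le_add (le_trans (norm_add_le _ _) (add_le_add h1 h2)) h3)
    have hcoef : (Lf : ℝ) * ‖e t‖ + (Lg : ℝ) * ‖e t‖ * umax ≤ a * ‖e t‖ := by
      rw [ha]
      nlinarith [mul_nonneg (mul_nonneg (NNReal.coe_nonneg Lg) hεnn) (norm_nonneg (e t))]
    linarith
  -- δ-perturbation + strict fencing theorem
  have hmain : ∀ δ : ℝ, 0 < δ → ‖e T‖ ≤ B T + δ * Real.exp ((a + 1) * T) := by
    intro δ hδ
    set C : ℝ → ℝ := fun t => B t + δ * Real.exp ((a + 1) * t) with hC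
    set C' : ℝ → ℝ := fun t => B' t + δ * ((a + 1) * Real.exp ((a + 1) * t)) with hC'
    have hCd : ∀ t : ℝ, HasDerivAt C (C' t) t := by
      intro t
      have h1 : HasDerivAt (fun t => Real.exp ((a + 1) * t)) ((a + 1) * Real.exp ((a + 1) * t)) t := by
        simpa [mul_comm] using ((hasDerivAt_id t).const_mul (a + 1)).exp
      exact (hBd t).add (h1.const_mul δ)
    have h0' : ‖e 0‖ ≤ C 0 := by
      have : e 0 = 0 := by simp [he, h0]
      rw [this]
      simp only [hC, hB0, norm_zero, zero_add, mul_one, Real.exp_zero]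
      positivity
    have bound : ∀ t ∈ Set.Ico (0:ℝ) T, ‖e t‖ = C t → ‖e' t‖ < C' t := by
      intro t ht heq
      have hk := key t ht
      have hmax : max t 0 = t := max_eq_left ht.1
      have hBp : B' t = a * B t + εmax * ‖g (y t)‖ := by simp only [hB', hmax]
      have hexpos : 0 < δ * Real.exp ((a + 1) * t) := by positivity
      calc ‖e' t‖ ≤ a * ‖e t‖ + εmax * ‖g (y t)‖ := hk
        _ = a * B t + a * (δ * Real.exp ((a + 1) * t)) + εmax * ‖g (y t)‖ := by
            rw [heq, hC]; ring
        _ < B' t + δ * ((a + 1) * Real.exp ((a + 1) * t)) := by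
            rw [hBp]; nlinarith
        _ = C' t := rfl
    have := image_norm_le_of_norm_deriv_right_lt_deriv_boundary hecont hed h0' hCd bound
      (Set.right_mem_Icc.2 hT)
    simpa [hC] using this
  have hfin : ‖e T‖ ≤ B T := by
    by_contra hlt
    push_neg at hlt
    have hd : 0 < (‖e T‖ - B T) / (2 * Real.exp ((a + 1) * T)) :=
      div_pos (by linarith) (by positivity)
    have := hmain _ hd
    rw [div_mul_comm] at this
    have hx1 : Real.exp ((a + 1) * T) / (2 * Real.exp ((a + 1) * T)) = 1 / 2 := by
      rw [div_eq_iff (by positivity)]; ring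
    rw [hx1] at this
    linarith
  -- identify B T with the stated integral
  have hidB : B T = εmax * ∫ τ in (0:ℝ)..T, Real.exp (a * (T - τ)) * ‖g (y τ)‖ := by
    have hcongr : (∫ τ in (0:ℝ)..T, Real.exp (a * (T - τ)) * ‖g (y τ)‖)
        = ∫ τ in (0:ℝ)..T, Real.exp (a * T) * h τ := by
      apply intervalIntegral.integral_congr
      intro τ hτ
      rw [Set.uIcc_of_le hT] at hτ
      have hm : max τ 0 = τ := max_eq_left hτ.1
      simp only [hh, hm]
      rw [show a * (T - τ) = a * T + -(a * τ) from by ring, Real.exp_add, mul_assoc]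
    rw [hcongr, intervalIntegral.integral_const_mul]
  rw [← hidB]
  exact hfin
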